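/- For integers n ≥ 1, 0 ≤ t ≤ n-1, and any integer t', the sum ∑_{s=0}^{n-1} (-1)^s C(n-t-1, s-t) C(n-s, t') equals (-1)^t (δ_{t', n-t} + δ_{t', n-t-1}). -/

import Mathlib

open Finset

/-- Binomial coefficient C(a,b) for integer arguments, with the convention
    C(a,b) = 0 when b < 0 or b > a. -/
def intChoose (a b : ℤ) : ℤ :=
  if 0 ≤ b ∧ b ≤ a then (a.toNat.choose b.toNat : ℤ) else 0

lemma intChoose_natCast (a b : ℕ) : intChoose (a : ℤ) (b : ℤ) = (a.choose b : ℤ) := by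
  unfold intChoose
  by_cases h : b ≤ a
  · rw [if_pos ⟨Int.natCast_nonneg b, by exact_mod_cast h⟩]
    simp
  · rw [if_neg (by push_neg; intro _; exact_mod_cast Nat.lt_of_not_le h),
      Nat.choose_eq_zero_of_lt (Nat.lt_of_not_le h)]
    simp

private def Aux (m r : ℕ) : ℤ :=
  ∑ k ∈ range (m+1), (-1:ℤ)^k * (m.choose k) * ((m-k).choose r)

private def Faux (m r : ℕ) : ℤ :=
  ∑ k ∈ range (m+1), (-1:ℤ)^k * (m.choose k) * ((m+1-k).choose r)

lemma Faux_zero (m : ℕ) : Faux m 0 = if m = 0 then 1 else 0 := by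
  unfold Faux
  simp only [Nat.choose_zero_right, Nat.cast_one, mul_one]
  exact Int.alternating_sum_range_choose

lemma Faux_succ (m r : ℕ) : Faux m (r+1) = Aux m r + Aux m (r+1) := by
  unfold Faux Aux
  rw [← Finset.sum_add_distrib]
  apply Finset.sum_congr rfl
  intro k hk
  have hk' : k ≤ m := Nat.lt_succ_iff.mp (Finset.mem_range.mp hk)
  have h : m + 1 - k = (m - k) + 1 := by omega
  rw [h, Nat.choose_succ_succ]
  push_cast
  ring

lemma Aux_succ (m r : ℕ) : Aux (m+1) r = Faux m r - Aux m r := by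
  have hF : Faux m r = ∑ j ∈ range (m+2), (-1:ℤ)^j * (m.choose j) * ((m+1-j).choose r) := by
    unfold Faux
    rw [Finset.sum_range_succ (fun j => (-1:ℤ)^j * (m.choose j) * ((m+1-j).choose r)) (m+1)]
    simp
  have hH : ∑ k ∈ range (m+1), (-1:ℤ)^k * (m.choose (k+1)) * ((m-k).choose r)
      = ((m+1).choose r : ℤ) - Faux m r := by
    rw [hF, Finset.sum_range_succ' (fun j => (-1:ℤ)^j * (m.choose j) * ((m+1-j).choose r)) (m+1)]
    have h : ∀ k ∈ range (m+1), (-1:ℤ)^(k+1) * (m.choose (k+1)) * ((m+1-(k+1)).choose r)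
        = -((-1:ℤ)^k * (m.choose (k+1)) * ((m-k).choose r)) := by
      intro k hk
      rw [Nat.succ_sub_succ]
      ring
    rw [Finset.sum_congr rfl h, Finset.sum_neg_distrib]
    simp
  unfold Aux
  rw [Finset.sum_range_succ' (fun k => (-1:ℤ)^k * ((m+1).choose k) * ((m+1-k).choose r)) (m+1)]
  have h : ∀ k ∈ range (m+1), (-1:ℤ)^(k+1) * ((m+1).choose (k+1)) * ((m+1-(k+1)).choose r)
      = -((-1:ℤ)^k * (m.choose k) * ((m-k).choose r))
        - ((-1:ℤ)^k * (m.choose (k+1)) * ((m-k).choose r)) := by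
    intro k hk
    rw [Nat.succ_sub_succ, Nat.choose_succ_succ]
    push_cast
    ring
  rw [Finset.sum_congr rfl h, Finset.sum_sub_distrib, hH, Finset.sum_neg_distrib]
  simp only [pow_zero, Nat.choose_zero_right, Nat.cast_one, one_mul, Nat.sub_zero]
  ring

lemma Aux_eq (m r : ℕ) : Aux m r = if r = m then 1 else 0 := by
  induction m generalizing r with
  | zero =>
    unfold Aux
    cases r <;> simp [Nat.choose]
  | succ m ih =>
    rw [Aux_succ]
    cases r with
    | zero =>
      rw [Faux_zero, ih]
      clear ih
      split_ifs <;> simp_all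
    | succ r =>
      rw [Faux_succ, ih, ih]
      clear ih
      split_ifs <;> simp_all

lemma Faux_eq (m T : ℕ) : Faux m T = (if T = m+1 then 1 else 0) + (if T = m then 1 else 0) := by
  cases T with
  | zero =>
    rw [Faux_zero]
    split_ifs <;> simp_all <;> omega
  | succ T =>
    rw [Faux_succ, Aux_eq, Aux_eq]
    split_ifs <;> simp_all <;> omega

/-- ∑_{s=0}^{n-1} (-1)^s C(n-t-1, s-t) C(n-s, t') = (-1)^t (δ_{t', n-t} + δ_{t', n-t-1}),
    for n ≥ 1, 0 ≤ t ≤ n-1 and any integer t'. -/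
theorem binomial_sum_lemma_one (n : ℕ) (hn : 1 ≤ n) (t : ℕ) (ht : t ≤ n - 1) (t' : ℤ) :
    ∑ s ∈ Finset.range n,
        (-1 : ℤ) ^ s * intChoose ((n : ℤ) - t - 1) ((s : ℤ) - t) * intChoose ((n : ℤ) - s) t'
      = (-1 : ℤ) ^ t *
          ((if t' = (n : ℤ) - t then 1 else 0) + (if t' = (n : ℤ) - t - 1 then 1 else 0)) := by
  obtain ⟨m, rfl⟩ : ∃ m, n = t + (m+1) := ⟨n - t - 1, by omega⟩
  by_cases ht' : 0 ≤ t'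
  · obtain ⟨T, rfl⟩ := Int.eq_ofNat_of_zero_le ht'
    rw [Finset.sum_range_add]
    have h1 : ∀ s ∈ range t,
        (-1 : ℤ)^s * intChoose ((t + (m+1) : ℕ) - t - 1 : ℤ) ((s : ℤ) - t)
          * intChoose (((t + (m+1) : ℕ) : ℤ) - s) (T : ℤ) = 0 := by
      intro s hs
      have hs' : s < t := Finset.mem_range.mp hs
      have : intChoose (((t + (m+1) : ℕ) : ℤ) - t - 1) ((s : ℤ) - t) = 0 := by
        unfold intChoose
        rw [if_neg]
        push_neg
        intro h
        exfalso
        omega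
      rw [this]
      ring
    rw [Finset.sum_congr rfl h1, Finset.sum_const_zero, zero_add]
    have h2 : ∀ k ∈ range (m+1),
        (-1 : ℤ)^(t+k) * intChoose (((t + (m+1) : ℕ) : ℤ) - t - 1) (((t+k : ℕ) : ℤ) - t)
          * intChoose (((t + (m+1) : ℕ) : ℤ) - ((t+k : ℕ) : ℤ)) (T : ℤ)
        = (-1:ℤ)^t * ((-1:ℤ)^k * (m.choose k) * ((m+1-k).choose T)) := by
      intro k hk
      have hk' : k ≤ m := Nat.lt_succ_iff.mp (Finset.mem_range.mp hk)
      have e1 : (((t + (m+1) : ℕ) : ℤ) - t - 1) = ((m : ℕ) : ℤ) := by push_cast; ring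
      have e2 : (((t+k : ℕ) : ℤ) - t) = ((k : ℕ) : ℤ) := by push_cast; ring
      have e3 : (((t + (m+1) : ℕ) : ℤ) - ((t+k : ℕ) : ℤ)) = ((m+1-k : ℕ) : ℤ) := by
        push_cast [hk']; omega
      rw [e1, e2, e3, intChoose_natCast, intChoose_natCast, pow_add]
      ring
    rw [Finset.sum_congr rfl h2, ← Finset.mul_sum]
    have : (∑ k ∈ range (m+1), (-1:ℤ)^k * (m.choose k) * ((m+1-k).choose T)) = Faux m T := rfl
    rw [this, Faux_eq]
    congr 1
    have e4 : ((t + (m+1) : ℕ) : ℤ) - t = ((m:ℕ) : ℤ) + 1 := by push_cast; ring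
    rw [e4]
    have c1 : ((T:ℤ) = (m:ℤ) + 1) ↔ T = m + 1 := by constructor <;> intro h <;> omega
    have c2 : ((T:ℤ) = (m:ℤ) + 1 - 1) ↔ T = m := by constructor <;> intro h <;> omega
    by_cases h1 : T = m + 1 <;> by_cases h2 : T = m <;>
      simp [h1, h2, c1, c2] <;> omega
  · have h0 : ∀ s ∈ range (t + (m+1)),
        (-1 : ℤ)^s * intChoose (((t + (m+1) : ℕ) : ℤ) - t - 1) ((s : ℤ) - t)
          * intChoose (((t + (m+1) : ℕ) : ℤ) - s) t' = 0 := by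
      intro s hs
      have : intChoose (((t + (m+1) : ℕ) : ℤ) - s) t' = 0 := by
        unfold intChoose
        rw [if_neg]
        push_neg
        intro h
        exact absurd h ht'
      rw [this]
      ring
    rw [Finset.sum_congr rfl h0, Finset.sum_const_zero]
    rw [if_neg (by push_cast; omega), if_neg (by push_cast; omega)]
    ring
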